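/- For any constant a ∈ (0,1) and reals 0 < c ≤ d, the sum Σ_{i=0}^{⌊c⌋} d·C(d,i)·(1−a)^{d−i}·a^i is O(⌈c⌉); more precisely, there is a constant K depending only on a such that for all natural numbers d and all natural m ≤ d, Σ_{i=0}^{m} d·C(d,i)·(1−a)^{d−i}·a^i ≤ K·(m+1). -/

import Mathlib

open Finset

/-- Proposition `tech`: for constant `a ∈ (0,1)` there is a constant `K`
such that for all `d` and `m ≤ d`,
`∑_{i=0}^{m} d·C(d,i)·(1−a)^{d−i}·a^i ≤ K·(m+1)`. -/
theorem binomial_tail_times_d {a : ℝ} (ha0 : 0 < a) (ha1 : a < 1) :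
    ∃ K : ℝ, ∀ d m : ℕ, m ≤ d →
      (∑ i ∈ Finset.range (m + 1),
          (d : ℝ) * (d.choose i : ℝ) * (1 - a) ^ (d - i) * a ^ i)
        ≤ K * (m + 1) := by
  refine ⟨1 / a, fun d m hm => ?_⟩
  have h1a : (0:ℝ) ≤ 1 - a := by linarith
  set f : ℕ → ℝ := fun j => a ^ j * (1 - a) ^ (d + 1 - j) * ((d+1).choose j : ℝ) with hf
  have hfnn : ∀ j, 0 ≤ f j := fun j => by
    positivity
  have hstep : ∀ i ∈ Finset.range (m+1),
      (d : ℝ) * (d.choose i : ℝ) * (1 - a) ^ (d - i) * a ^ i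
        ≤ ((m:ℝ)+1) / a * f (i+1) := by
    intro i hi
    have hi' : i ≤ m := Nat.lt_succ_iff.mp (Finset.mem_range.mp hi)
    have hchoose : ((d+1 : ℕ) : ℝ) * (d.choose i : ℝ) = ((d+1).choose (i+1) : ℝ) * ((i+1 : ℕ) : ℝ) := by
      exact_mod_cast congrArg (Nat.cast (R := ℝ)) (Nat.add_one_mul_choose_eq d i)
    have hsub : d + 1 - (i+1) = d - i := by omega
    rw [hf]
    simp only [hsub]
    have h1 : (d : ℝ) * (d.choose i : ℝ) ≤ ((m:ℝ)+1) * ((d+1).choose (i+1) : ℝ) := by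
      have : (d : ℝ) * (d.choose i : ℝ) ≤ ((d:ℝ)+1) * (d.choose i : ℝ) := by
        have : (0:ℝ) ≤ (d.choose i : ℝ) := Nat.cast_nonneg _
        nlinarith
      rw [show ((d:ℝ)+1) * (d.choose i : ℝ) = ((d+1 : ℕ):ℝ) * (d.choose i:ℝ) by push_cast; ring] at this
      rw [hchoose] at this
      calc (d : ℝ) * (d.choose i : ℝ) ≤ ((d+1).choose (i+1) : ℝ) * ((i+1 : ℕ) : ℝ) := this
        _ ≤ ((m:ℝ)+1) * ((d+1).choose (i+1) : ℝ) := by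
            have hc : (0:ℝ) ≤ ((d+1).choose (i+1) : ℝ) := Nat.cast_nonneg _
            have : ((i+1 : ℕ):ℝ) ≤ (m:ℝ)+1 := by push_cast; exact_mod_cast by exact_mod_cast add_le_add_left (Nat.cast_le.mpr hi') 1
            nlinarith
    have hpow : (0:ℝ) ≤ (1 - a) ^ (d - i) * a ^ i := by positivity
    have : (d : ℝ) * (d.choose i : ℝ) * ((1 - a) ^ (d - i) * a ^ i)
        ≤ ((m:ℝ)+1) * ((d+1).choose (i+1) : ℝ) * ((1 - a) ^ (d - i) * a ^ i) :=
      mul_le_mul_of_nonneg_right h1 hpow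
    calc (d : ℝ) * (d.choose i : ℝ) * (1 - a) ^ (d - i) * a ^ i
        = (d : ℝ) * (d.choose i : ℝ) * ((1 - a) ^ (d - i) * a ^ i) := by ring
      _ ≤ ((m:ℝ)+1) * ((d+1).choose (i+1) : ℝ) * ((1 - a) ^ (d - i) * a ^ i) := this
      _ = ((m:ℝ)+1) / a * (a ^ (i+1) * (1 - a) ^ (d - i) * ((d+1).choose (i+1) : ℝ)) := by
          field_simp
          ring
  have hsum1 : ∑ j ∈ Finset.range (d+2), f j = 1 := by
    have := add_pow a (1 - a) (d+1)
    simp only [add_sub_cancel, one_pow] at this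
    rw [hf]
    exact this.symm
  calc (∑ i ∈ Finset.range (m + 1), (d : ℝ) * (d.choose i : ℝ) * (1 - a) ^ (d - i) * a ^ i)
      ≤ ∑ i ∈ Finset.range (m+1), ((m:ℝ)+1) / a * f (i+1) := Finset.sum_le_sum hstep
    _ = ((m:ℝ)+1) / a * ∑ i ∈ Finset.range (m+1), f (i+1) := by rw [Finset.mul_sum]
    _ ≤ ((m:ℝ)+1) / a * ∑ j ∈ Finset.range (d+2), f j := by
        apply mul_le_mul_of_nonneg_left _ (by positivity)
        have h1 : ∑ i ∈ Finset.range (m+1), f (i+1) ≤ ∑ j ∈ Finset.range (m+2), f j := by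
          rw [Finset.sum_range_succ' f (m+1)]
          exact le_add_of_nonneg_right (hfnn 0)
        refine h1.trans (Finset.sum_le_sum_of_subset_of_nonneg ?_ fun j _ _ => hfnn j)
        exact Finset.range_subset_range.mpr (by omega)
    _ = 1 / a * ((m:ℝ) + 1) := by rw [hsum1]; ring
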